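/- Let ζ₀, ζ₁ : ℝ → ℝ be differentiable with ζ₁(t) = ζ₀'(t) + γ₁·ζ₀(t), and suppose ζ₁'(t) + γ₂·ζ₁(t) ≥ 0 for all t ≥ 0 with γ₁, γ₂ > 0. If ζ₀(0) ≥ 0 and ζ₁(0) ≥ 0, then ζ₀(t) ≥ 0 and ζ₁(t) ≥ 0 for all t ≥ 0. -/

import Mathlib

lemma gronwall_nonneg (f : ℝ → ℝ) (γ : ℝ)
    (hf : Differentiable ℝ f)
    (hineq : ∀ t : ℝ, 0 ≤ t → deriv f t + γ * f t ≥ 0)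
    (h0 : f 0 ≥ 0) : ∀ t : ℝ, 0 ≤ t → f t ≥ 0 := by
  set g : ℝ → ℝ := fun t => f t * Real.exp (γ * t) with hg
  have hgd : Differentiable ℝ g := hf.mul (by fun_prop)
  have hderiv : ∀ t : ℝ, deriv g t = (deriv f t + γ * f t) * Real.exp (γ * t) := by
    intro t
    have h1 : HasDerivAt (fun t => Real.exp (γ * t)) (γ * Real.exp (γ * t)) t := by
      have := (Real.hasDerivAt_exp (γ * t)).comp t ((hasDerivAt_id t).const_mul γ)
      exact this.congr_deriv (by ring)
    have := ((hf t).hasDerivAt.mul h1)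
    rw [show deriv g t = _ from this.deriv]; ring
  have hmono : MonotoneOn g (Set.Ici (0 : ℝ)) := by
    apply monotoneOn_of_deriv_nonneg (convex_Ici 0) hgd.continuous.continuousOn
      hgd.differentiableOn
    intro t ht
    simp only [interior_Ici, Set.mem_Ioi] at ht
    rw [hderiv t]
    exact mul_nonneg (hineq t ht.le) (Real.exp_pos _).le
  intro t ht
  have := hmono (Set.mem_Ici.mpr le_rfl) (Set.mem_Ici.mpr ht) ht
  have hg0 : g 0 ≥ 0 := by simpa [hg] using h0
  have hgt : g t ≥ 0 := le_trans hg0 this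
  have hpos := Real.exp_pos (γ * t)
  have hgt' : f t * Real.exp (γ * t) ≥ 0 := hgt
  nlinarith [hgt', hpos]

/-- Forward invariance for a relative-degree-2 HOCBF with linear class K
functions `α₁ s = γ₁ s` and `α₂ s = γ₂ s`. -/
theorem hocbf_forward_invariance (ζ₀ ζ₁ : ℝ → ℝ) (γ₁ γ₂ : ℝ)
    (h0d : Differentiable ℝ ζ₀) (h1d : Differentiable ℝ ζ₁)
    (hγ₁ : 0 < γ₁) (hγ₂ : 0 < γ₂)
    (hdef : ∀ t : ℝ, ζ₁ t = deriv ζ₀ t + γ₁ * ζ₀ t)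
    (hineq : ∀ t : ℝ, 0 ≤ t → deriv ζ₁ t + γ₂ * ζ₁ t ≥ 0)
    (h00 : ζ₀ 0 ≥ 0) (h10 : ζ₁ 0 ≥ 0) :
    ∀ t : ℝ, 0 ≤ t → ζ₀ t ≥ 0 ∧ ζ₁ t ≥ 0 := by
  have h1 : ∀ t : ℝ, 0 ≤ t → ζ₁ t ≥ 0 :=
    gronwall_nonneg ζ₁ γ₂ h1d hineq h10
  have h0 : ∀ t : ℝ, 0 ≤ t → ζ₀ t ≥ 0 := by
    apply gronwall_nonneg ζ₀ γ₁ h0d _ h00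
    intro t ht
    rw [← hdef t]
    exact h1 t ht
  exact fun t ht => ⟨h0 t ht, h1 t ht⟩
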